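/- (Cauchy–Schwarz for β₂) Let (C,e,V,J) be a J²C-module structure and β₂ its associated hermitian form. Then for all u,v ∈ V: |β₂(u,v)| ≤ |u|·|v|, with equality if and only if v ∈ Cu or u ∈ Cv. -/

import Mathlib

open RealInnerProductSpace

section Aux

variable {C V : Type*} [NormedAddCommGroup C] [InnerProductSpace ℝ C]
  [NormedAddCommGroup V] [InnerProductSpace ℝ V]

lemma beta2_aux_polar1 (J : C →ₗ[ℝ] V →ₗ[ℝ] V)
    (hnorm : ∀ (ζ : C) (v : V), ‖J ζ v‖ = ‖ζ‖ * ‖v‖) (ζ η : C) (v : V) :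
    ⟪J ζ v, J η v⟫ = ⟪ζ, η⟫ * ‖v‖ ^ 2 := by
  have h1 := hnorm ζ v
  have h2 := hnorm η v
  have hJ : J (ζ + η) v = J ζ v + J η v := by simp [map_add]
  have e1 : ‖J ζ v + J η v‖ ^ 2 = (‖ζ + η‖ * ‖v‖) ^ 2 := by rw [← hJ, hnorm]
  rw [norm_add_sq_real (J ζ v) (J η v), mul_pow, norm_add_sq_real ζ η, h1, h2] at e1
  nlinarith [e1]

lemma beta2_aux_polar2 (J : C →ₗ[ℝ] V →ₗ[ℝ] V)
    (hnorm : ∀ (ζ : C) (v : V), ‖J ζ v‖ = ‖ζ‖ * ‖v‖) (ζ η : C) (v w : V) :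
    ⟪J ζ v, J η w⟫ + ⟪J ζ w, J η v⟫ = 2 * ⟪ζ, η⟫ * ⟪v, w⟫ := by
  have h := beta2_aux_polar1 J hnorm ζ η (v + w)
  have h1 := beta2_aux_polar1 J hnorm ζ η v
  have h2 := beta2_aux_polar1 J hnorm ζ η w
  have hv : ∀ τ : C, J τ (v + w) = J τ v + J τ w := fun τ => map_add (J τ) v w
  rw [hv ζ, hv η, norm_add_sq_real] at h
  simp only [inner_add_left, inner_add_right] at h
  linarith

lemma beta2_aux_conj (J : C →ₗ[ℝ] V →ₗ[ℝ] V) (e : C)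
    (hJe : ∀ v : V, J e v = v)
    (hnorm : ∀ (ζ : C) (v : V), ‖J ζ v‖ = ‖ζ‖ * ‖v‖) (η : C) (v w : V) :
    ⟪J η v, w⟫ = 2 * ⟪e, η⟫ * ⟪v, w⟫ - ⟪v, J η w⟫ := by
  have h := beta2_aux_polar2 J hnorm e η v w
  rw [hJe v, hJe w] at h
  have : ⟪J η v, w⟫ = ⟪w, J η v⟫ := real_inner_comm _ _
  linarith

end Aux

/-- Cauchy–Schwarz for `β₂`: in a J²C-module structure,
`‖β₂(u,v)‖ ≤ ‖u‖·‖v‖`, with equality iff `v ∈ Cu` or `u ∈ Cv`. -/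
theorem beta2_cauchy_schwarz
    {C V : Type*} [NormedAddCommGroup C] [InnerProductSpace ℝ C] [FiniteDimensional ℝ C]
    [NormedAddCommGroup V] [InnerProductSpace ℝ V] [FiniteDimensional ℝ V]
    (J : C →ₗ[ℝ] V →ₗ[ℝ] V) (e : C) (he : ‖e‖ = 1)
    (hJe : ∀ v : V, J e v = v)
    (hnorm : ∀ (ζ : C) (v : V), ‖J ζ v‖ = ‖ζ‖ * ‖v‖)
    (hJ2 : ∀ (ζ η : C) (v : V), ∃ τ : C, J ζ (J η v) = J τ v)
    (β₂ : V → V → C)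
    (hβ : ∀ (v u : V) (ζ : C), ⟪β₂ v u, ζ⟫ = ⟪J ζ u, v⟫) :
    ∀ u v : V,
      ‖β₂ u v‖ ≤ ‖u‖ * ‖v‖ ∧
      (‖β₂ u v‖ = ‖u‖ * ‖v‖ ↔ ((∃ ζ : C, v = J ζ u) ∨ (∃ ζ : C, u = J ζ v))) := by
  have polar1 := beta2_aux_polar1 J hnorm
  have conj := beta2_aux_conj J e hJe hnorm
  intro u v
  have key : ∀ η : C, ⟪β₂ u v, η⟫ = ⟪J η v, u⟫ := fun η => hβ u v η
  have hsq : ‖β₂ u v‖ ^ 2 = ⟪J (β₂ u v) v, u⟫ := by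
    rw [← key, real_inner_self_eq_norm_sq]
  -- the inequality
  have hle2 : ‖β₂ u v‖ ^ 2 ≤ ‖β₂ u v‖ * (‖v‖ * ‖u‖) := by
    calc ‖β₂ u v‖ ^ 2 = ⟪J (β₂ u v) v, u⟫ := hsq
      _ ≤ ‖J (β₂ u v) v‖ * ‖u‖ := real_inner_le_norm _ _
      _ = ‖β₂ u v‖ * (‖v‖ * ‖u‖) := by rw [hnorm]; ring
  have ineq : ‖β₂ u v‖ ≤ ‖u‖ * ‖v‖ := by
    rcases eq_or_lt_of_le (norm_nonneg (β₂ u v)) with h | h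
    · rw [← h]; positivity
    · have := (mul_le_mul_iff_right₀ h).1 (by nlinarith : ‖β₂ u v‖ * ‖β₂ u v‖ ≤ ‖β₂ u v‖ * (‖v‖ * ‖u‖))
      linarith [mul_comm ‖v‖ ‖u‖]
  refine ⟨ineq, ?_, ?_⟩
  · -- equality → v ∈ Cu or u ∈ Cv
    intro heq
    by_cases hv : v = 0
    · exact Or.inl ⟨0, by simp [hv]⟩
    by_cases hu : u = 0
    · exact Or.inr ⟨0, by simp [hu]⟩
    · have hwnorm : ‖J (β₂ u v) v‖ = ‖u‖ * ‖v‖ * ‖v‖ := by rw [hnorm, heq]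
      have hinner : ⟪J (β₂ u v) v, u⟫ = ‖J (β₂ u v) v‖ * ‖u‖ := by
        rw [← hsq, heq, hwnorm]; ring
      have hpar : ‖u‖ • J (β₂ u v) v = ‖J (β₂ u v) v‖ • u :=
        inner_eq_norm_mul_iff_real.1 hinner
      have hw0 : ‖J (β₂ u v) v‖ ≠ 0 := by
        apply ne_of_gt
        rw [hwnorm]
        exact mul_pos (mul_pos (norm_pos_iff.2 hu) (norm_pos_iff.2 hv)) (norm_pos_iff.2 hv)
      refine Or.inr ⟨(‖u‖ / ‖J (β₂ u v) v‖) • β₂ u v, ?_⟩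
      have h5 : J ((‖u‖ / ‖J (β₂ u v) v‖) • β₂ u v) v
          = (‖u‖ / ‖J (β₂ u v) v‖) • (J (β₂ u v) v) := by
        rw [map_smul, LinearMap.smul_apply]
      have h6 : (‖u‖ / ‖J (β₂ u v) v‖) • (J (β₂ u v) v) = u := by
        rw [div_eq_inv_mul, mul_smul, hpar, inv_smul_smul₀ hw0]
      rw [h5, h6]
  · -- v ∈ Cu or u ∈ Cv → equality
    rintro (⟨ζ, rfl⟩ | ⟨ζ, rfl⟩)
    · -- v = J ζ u
      by_cases hz : ζ = 0
      · have hz' : J (0 : C) u = 0 := by simp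
        subst hz
        rw [hz', norm_zero, mul_zero]
        have h0 : ‖β₂ u 0‖ ^ 2 = 0 := by
          have := hβ u 0 (β₂ u 0)
          rw [real_inner_self_eq_norm_sq] at this
          rw [this, map_zero, inner_zero_left]
        exact (pow_eq_zero_iff two_ne_zero).1 h0
      · set ζ' : C := (2 * ⟪ζ, e⟫) • e - ζ with hζ'
        have hc1 : ⟪ζ', e⟫ = ⟪ζ, e⟫ := by
          rw [hζ', inner_sub_left, real_inner_smul_left, real_inner_self_eq_norm_sq, he]
          ring
        have hc2 : ⟪ζ, ζ'⟫ = 2 * ⟪ζ, e⟫ ^ 2 - ‖ζ‖ ^ 2 := by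
          rw [hζ', inner_sub_right, real_inner_smul_right, real_inner_self_eq_norm_sq]
          ring
        have hsq' : ‖ζ'‖ ^ 2 = ‖ζ‖ ^ 2 := by
          rw [hζ', norm_sub_sq_real, real_inner_smul_left, norm_smul, Real.norm_eq_abs,
            he, mul_one, sq_abs, real_inner_comm e ζ]
          ring
        have hζ'norm : ‖ζ'‖ = ‖ζ‖ := by
          have h' : ‖ζ'‖ = Real.sqrt (‖ζ'‖ ^ 2) := (Real.sqrt_sq (norm_nonneg _)).symm
          rw [h', hsq', Real.sqrt_sq (norm_nonneg _)]
        have e1 := polar1 ζ e u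
        rw [hJe u] at e1
        have e2 := polar1 ζ ζ' u
        have e2' : ⟪J ζ' u, J ζ u⟫ = ⟪ζ, ζ'⟫ * ‖u‖ ^ 2 := by
          rw [real_inner_comm]; exact e2
        have e3 : ⟪e, ζ'⟫ = ⟪ζ, e⟫ := by rw [real_inner_comm]; exact hc1
        have hval : ⟪β₂ u (J ζ u), ζ'⟫ = ‖ζ‖ ^ 2 * ‖u‖ ^ 2 := by
          rw [hβ u (J ζ u) ζ', conj ζ' (J ζ u) u, e1, e2, hc2, e3]
          ring
        have hge : ‖ζ‖ ^ 2 * ‖u‖ ^ 2 ≤ ‖β₂ u (J ζ u)‖ * ‖ζ‖ := by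
          rw [← hval, ← hζ'norm]
          exact real_inner_le_norm _ _
        have hzpos : 0 < ‖ζ‖ := norm_pos_iff.2 hz
        have hlb : ‖ζ‖ * ‖u‖ ^ 2 ≤ ‖β₂ u (J ζ u)‖ := by
          rw [← mul_le_mul_iff_left₀ hzpos]
          nlinarith
        have hb : ‖u‖ * ‖J ζ u‖ = ‖ζ‖ * ‖u‖ ^ 2 := by rw [hnorm]; ring
        exact le_antisymm ineq (by rw [hb]; exact hlb)
    · -- u = J ζ v
      by_cases hz : ζ = 0
      · have hz' : J (0 : C) v = 0 := by simp
        subst hz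
        rw [hz', norm_zero, zero_mul]
        have h0 : ‖β₂ 0 v‖ ^ 2 = 0 := by
          have := hβ 0 v (β₂ 0 v)
          rw [real_inner_self_eq_norm_sq] at this
          rw [this, inner_zero_right]
        exact (pow_eq_zero_iff two_ne_zero).1 h0
      · have hval : ⟪β₂ (J ζ v) v, ζ⟫ = ‖ζ‖ ^ 2 * ‖v‖ ^ 2 := by
          rw [hβ (J ζ v) v ζ, real_inner_self_eq_norm_sq, hnorm]
          ring
        have hge : ‖ζ‖ ^ 2 * ‖v‖ ^ 2 ≤ ‖β₂ (J ζ v) v‖ * ‖ζ‖ := by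
          rw [← hval]; exact real_inner_le_norm _ _
        have hzpos : 0 < ‖ζ‖ := norm_pos_iff.2 hz
        have hlb : ‖ζ‖ * ‖v‖ ^ 2 ≤ ‖β₂ (J ζ v) v‖ := by
          rw [← mul_le_mul_iff_left₀ hzpos]
          nlinarith
        have hb : ‖J ζ v‖ * ‖v‖ = ‖ζ‖ * ‖v‖ ^ 2 := by rw [hnorm]; ring
        exact le_antisymm ineq (by rw [hb]; exact hlb)
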